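/- For every γ > 0 there exists a constant c > 0 such that for every integer n ≥ 1 there exists a Lipschitz function v : [−1,1] → ℝ which is not identically zero, satisfies v(−1) = v(1) = 0, is continuously differentiable except at finitely many points, and satisfies ∫_{−1}^1 ( v′(x)² + (nπ)² |x|^{2γ} v(x)² ) dx ≤ c · n^{2/(1+γ)} · ∫_{−1}^1 v(x)² dx. (Upper bound λ_{n,γ} ≤ c n^{2/(1+γ)} for the first Dirichlet eigenvalue of A_{n,γ} via its Rayleigh-quotient characterization; a suitable test function is the hat function v(x) = max(0, 1 − k|x|) with k of order n^{1/(γ+1)}.) -/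

import Mathlib

open MeasureTheory Set

set_option maxHeartbeats 1600000

/-- Upper bound `λ_{n,γ} ≤ c n^(2/(1+γ))` for the first Dirichlet eigenvalue of
`A_{n,γ} v = -v'' + (nπ)² |x|^(2γ) v` on `(-1,1)`, via a Lipschitz test function
(continuously differentiable except at finitely many points) in the
Rayleigh-quotient characterization. -/
theorem first_eigenvalue_upper_bound (γ : ℝ) (hγ : 0 < γ) :
    ∃ c > 0, ∀ n : ℕ, 1 ≤ n →
      ∃ (v v' : ℝ → ℝ) (K : NNReal) (s : Finset ℝ),
        LipschitzOnWith K v (Set.Icc (-1 : ℝ) 1) ∧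
        (∃ x ∈ Set.Icc (-1 : ℝ) 1, v x ≠ 0) ∧
        v (-1) = 0 ∧ v 1 = 0 ∧
        (∀ x ∈ Set.Ioo (-1 : ℝ) 1 \ (s : Set ℝ), HasDerivAt v (v' x) x) ∧
        ContinuousOn v' (Set.Ioo (-1 : ℝ) 1 \ (s : Set ℝ)) ∧
        (∫ x in Set.Ioo (-1 : ℝ) 1,
            ((v' x) ^ 2 + ((n : ℝ) * Real.pi) ^ 2 * |x| ^ (2 * γ) * (v x) ^ 2))
          ≤ c * (n : ℝ) ^ ((2 : ℝ) / (1 + γ)) * ∫ x in Set.Ioo (-1 : ℝ) 1, (v x) ^ 2 := by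
  have h1γ : (0:ℝ) < 1 + γ := by linarith
  refine ⟨32 * (4 + Real.pi ^ 2) / 9, by positivity, ?_⟩
  intro n hn
  have hn1 : (1:ℝ) ≤ (n:ℝ) := by exact_mod_cast hn
  have hn0 : (0:ℝ) < (n:ℝ) := by linarith
  set a : ℝ := 1 / (1 + γ) with ha
  have ha0 : 0 ≤ a := by positivity
  set k : ℝ := (n:ℝ) ^ a with hk
  have hk1 : 1 ≤ k := Real.one_le_rpow hn1 ha0
  have hk0 : (0:ℝ) < k := by linarith
  -- rpow identities
  have hk2 : k ^ 2 = (n:ℝ) ^ ((2:ℝ) / (1 + γ)) := by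
    rw [hk, ← Real.rpow_natCast ((n:ℝ) ^ a) 2, ← Real.rpow_mul hn0.le]
    congr 1
    rw [ha]
    push_cast
    field_simp
  have hpot : (n:ℝ) ^ 2 * (1 / k) ^ (2 * γ) = (n:ℝ) ^ ((2:ℝ) / (1 + γ)) := by
    rw [hk, one_div, ← Real.rpow_neg_one ((n:ℝ) ^ a), ← Real.rpow_mul hn0.le,
      ← Real.rpow_mul hn0.le, ← Real.rpow_natCast (n:ℝ) 2, ← Real.rpow_add hn0]
    congr 1
    have hne : (1+γ) ≠ 0 := ne_of_gt h1γ
    push_cast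
    field_simp
    rw [ha]; field_simp; ring
  -- the test function
  set v : ℝ → ℝ := fun x => max 0 (1 - k ^ 2 * x ^ 2) with hv
  set v' : ℝ → ℝ := fun x => if k ^ 2 * x ^ 2 < 1 then -(2 * k ^ 2 * x) else 0 with hv'
  refine ⟨v, v', (2 * k ^ 2).toNNReal, {-(1/k), 1/k}, ?_, ?_, ?_, ?_, ?_, ?_, ?_⟩
  · -- Lipschitz
    apply LipschitzOnWith.of_dist_le_mul
    intro x hx y hy
    simp only [Real.dist_eq, Real.coe_toNNReal _ (by positivity : (0:ℝ) ≤ 2 * k ^ 2)]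
    have h1 : |v x - v y| ≤ |(1 - k ^ 2 * x ^ 2) - (1 - k ^ 2 * y ^ 2)| := by
      have h2 := abs_max_sub_max_le_abs (1 - k ^ 2 * x ^ 2) (1 - k ^ 2 * y ^ 2) 0
      simp only [hv]
      rw [max_comm (0:ℝ) (1 - k ^ 2 * x ^ 2), max_comm (0:ℝ) (1 - k ^ 2 * y ^ 2)]
      exact h2
    refine h1.trans ?_
    have : (1 - k ^ 2 * x ^ 2) - (1 - k ^ 2 * y ^ 2) = (k ^ 2 * (y + x)) * (y - x) := by ring
    rw [this, abs_mul]
    have hxy : |k ^ 2 * (y + x)| ≤ 2 * k ^ 2 := by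
      rw [abs_mul, abs_of_nonneg (by positivity : (0:ℝ) ≤ k ^ 2)]
      have : |y + x| ≤ 2 := by
        have := abs_le.mpr ⟨hx.1, hx.2⟩
        have := abs_le.mpr ⟨hy.1, hy.2⟩
        calc |y + x| ≤ |y| + |x| := abs_add_le _ _
          _ ≤ 2 := by linarith [abs_le.mpr ⟨hx.1, hx.2⟩, abs_le.mpr ⟨hy.1, hy.2⟩]
      nlinarith [sq_nonneg k]
    have : |y - x| = |x - y| := abs_sub_comm _ _
    rw [this]
    exact mul_le_mul_of_nonneg_right hxy (abs_nonneg _)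
  · exact ⟨0, by norm_num, by simp [hv]⟩
  · simp only [hv]
    rw [max_eq_left]
    nlinarith
  · simp only [hv]
    rw [max_eq_left]
    nlinarith
  · -- derivative
    intro x hx
    obtain ⟨hx1, hx2⟩ := hx
    have hxs : x ≠ -(1/k) ∧ x ≠ 1/k := by
      constructor <;> (intro h; apply hx2; simp [h])
    rcases lt_trichotomy (k ^ 2 * x ^ 2) 1 with h | h | h
    · have hU : {y : ℝ | k ^ 2 * y ^ 2 < 1} ∈ nhds x :=
        (isOpen_lt (by fun_prop) continuous_const).mem_nhds h
      have heq : v =ᶠ[nhds x] fun y => 1 - k ^ 2 * y ^ 2 := by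
        filter_upwards [hU] with y hy
        exact max_eq_right (by nlinarith [hy] : (0:ℝ) ≤ 1 - k ^ 2 * y ^ 2)
      have hd : HasDerivAt (fun y : ℝ => 1 - k ^ 2 * y ^ 2) (-(2 * k ^ 2 * x)) x := by
        have := ((hasDerivAt_pow 2 x).const_mul (k ^ 2)).const_sub 1
        convert this using 1
        all_goals first | rfl | (push_cast; ring)
      have : v' x = -(2 * k ^ 2 * x) := if_pos h
      rw [this]
      exact hd.congr_of_eventuallyEq heq
    · exfalso
      have hh : (k * x - 1) * (k * x + 1) = 0 := by nlinarith
      rcases mul_eq_zero.mp hh with h' | h'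
      · exact hxs.2 (by field_simp; linarith)
      · exact hxs.1 (by field_simp; linarith)
    · have hW : {y : ℝ | 1 < k ^ 2 * y ^ 2} ∈ nhds x :=
        (isOpen_lt continuous_const (by fun_prop)).mem_nhds h
      have heq : v =ᶠ[nhds x] fun _ => (0:ℝ) := by
        filter_upwards [hW] with y hy
        exact max_eq_left (by nlinarith [hy] : 1 - k ^ 2 * y ^ 2 ≤ 0)
      have : v' x = 0 := if_neg (by push_neg; linarith)
      rw [this]
      exact (hasDerivAt_const x 0).congr_of_eventuallyEq heq
  · -- continuity of v'
    intro x hx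
    obtain ⟨hx1, hx2⟩ := hx
    rcases lt_trichotomy (k ^ 2 * x ^ 2) 1 with h | h | h
    · have hU : {y : ℝ | k ^ 2 * y ^ 2 < 1} ∈ nhds x :=
        (isOpen_lt (by fun_prop) continuous_const).mem_nhds h
      have heq : v' =ᶠ[nhds x] fun y => -(2 * k ^ 2 * y) := by
        filter_upwards [hU] with y hy
        exact if_pos hy
      exact ((by fun_prop : Continuous fun y : ℝ => -(2 * k ^ 2 * y)).continuousAt.congr
        heq.symm).continuousWithinAt
    · exfalso
      have hxs : x ≠ -(1/k) ∧ x ≠ 1/k := by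
        constructor <;> (intro hh; apply hx2; simp [hh])
      have hh : (k * x - 1) * (k * x + 1) = 0 := by nlinarith
      rcases mul_eq_zero.mp hh with h' | h'
      · exact hxs.2 (by field_simp; linarith)
      · exact hxs.1 (by field_simp; linarith)
    · have hW : {y : ℝ | 1 < k ^ 2 * y ^ 2} ∈ nhds x :=
        (isOpen_lt continuous_const (by fun_prop)).mem_nhds h
      have heq : v' =ᶠ[nhds x] fun _ => (0:ℝ) := by
        filter_upwards [hW] with y hy
        exact if_neg (by push_neg; linarith)
      exact (continuousAt_const.congr heq.symm).continuousWithinAt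
  · -- the integral inequality
    set M : ℝ := 4 * k ^ 2 + ((n:ℝ) * Real.pi) ^ 2 * (1/k) ^ (2*γ) with hM
    have hM0 : 0 ≤ M := by positivity
    have hvnn : ∀ x, 0 ≤ v x := fun x => le_max_left _ _
    have hvle : ∀ x, v x ≤ 1 := by
      intro x
      apply max_le (by norm_num)
      nlinarith [mul_nonneg (sq_nonneg k) (sq_nonneg x)]
    -- pointwise upper bound for the integrand
    have hfg : ∀ x, (v' x) ^ 2 + ((n:ℝ) * Real.pi) ^ 2 * |x| ^ (2*γ) * (v x) ^ 2
        ≤ Set.indicator (Icc (-(1/k)) (1/k)) (fun _ => M) x := by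
      intro x
      by_cases hxk : |x| ≤ 1/k
      · have hmem : x ∈ Icc (-(1/k)) (1/k) := by
          rcases abs_le.mp hxk with ⟨h1, h2⟩; exact ⟨h1, h2⟩
        rw [Set.indicator_of_mem hmem]
        have h1 : (v' x) ^ 2 ≤ 4 * k ^ 2 := by
          by_cases h : k ^ 2 * x ^ 2 < 1
          · simp only [hv', if_pos h]
            nlinarith [mul_nonneg (sq_nonneg k) (sq_nonneg x), sq_nonneg k]
          · simp only [hv', if_neg h]
            nlinarith [sq_nonneg k]
        have h2 : |x| ^ (2*γ) ≤ (1/k) ^ (2*γ) :=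
          Real.rpow_le_rpow (abs_nonneg x) hxk (by positivity)
        have h3 : (v x) ^ 2 ≤ 1 := by nlinarith [hvnn x, hvle x]
        have hb : (0:ℝ) ≤ ((n:ℝ) * Real.pi) ^ 2 := sq_nonneg _
        have h4 : ((n:ℝ) * Real.pi) ^ 2 * |x| ^ (2*γ) * (v x) ^ 2
            ≤ ((n:ℝ) * Real.pi) ^ 2 * (1/k) ^ (2*γ) := by
          calc ((n:ℝ) * Real.pi) ^ 2 * |x| ^ (2*γ) * (v x) ^ 2
              ≤ ((n:ℝ) * Real.pi) ^ 2 * (1/k) ^ (2*γ) * 1 := by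
                apply mul_le_mul (mul_le_mul_of_nonneg_left h2 hb) h3 (sq_nonneg _)
                positivity
            _ = ((n:ℝ) * Real.pi) ^ 2 * (1/k) ^ (2*γ) := mul_one _
        rw [hM]; linarith
      · push_neg at hxk
        have hmem : x ∉ Icc (-(1/k)) (1/k) := by
          rw [mem_Icc]; intro hh
          exact absurd (abs_le.mpr ⟨hh.1, hh.2⟩) (not_le.mpr hxk)
        rw [Set.indicator_of_notMem hmem]
        have hkx : 1 < |x| * k := (div_lt_iff₀ hk0).mp hxk
        have hgt : 1 < k ^ 2 * x ^ 2 := by nlinarith [sq_abs x, abs_nonneg x]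
        have hv0 : v x = 0 := max_eq_left (by nlinarith)
        have hv'0 : v' x = 0 := if_neg (by push_neg; linarith)
        rw [hv0, hv'0]
        simp
    have hgint : Integrable (Set.indicator (Icc (-(1/k)) (1/k)) (fun _ => M))
        (volume.restrict (Ioo (-1:ℝ) 1)) := by
      apply (integrable_indicator_iff measurableSet_Icc).mpr
      apply (integrableOn_const_iff).mpr
      right
      calc (volume.restrict (Ioo (-1:ℝ) 1)) (Icc (-(1/k)) (1/k))
          ≤ volume (Ioo (-1:ℝ) 1) := by
            rw [Measure.restrict_apply measurableSet_Icc]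
            exact measure_mono inter_subset_right
        _ < ⊤ := by rw [Real.volume_Ioo]; exact ENNReal.ofReal_lt_top
    have hup : (∫ x in Ioo (-1:ℝ) 1,
          ((v' x) ^ 2 + ((n:ℝ) * Real.pi) ^ 2 * |x| ^ (2*γ) * (v x) ^ 2))
        ≤ (2/k) * M := by
      have h0 : ∀ x, 0 ≤ (v' x) ^ 2 + ((n:ℝ) * Real.pi) ^ 2 * |x| ^ (2*γ) * (v x) ^ 2 := by
        intro x; positivity
      calc (∫ x in Ioo (-1:ℝ) 1,
            ((v' x) ^ 2 + ((n:ℝ) * Real.pi) ^ 2 * |x| ^ (2*γ) * (v x) ^ 2))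
          ≤ ∫ x in Ioo (-1:ℝ) 1, Set.indicator (Icc (-(1/k)) (1/k)) (fun _ => M) x :=
            integral_mono_of_nonneg (Filter.Eventually.of_forall h0) hgint
              (Filter.Eventually.of_forall hfg)
        _ = ((volume.restrict (Ioo (-1:ℝ) 1)) (Icc (-(1/k)) (1/k))).toReal * M := by
            rw [integral_indicator measurableSet_Icc, setIntegral_const, smul_eq_mul, measureReal_def]
        _ ≤ (2/k) * M := by
            apply mul_le_mul_of_nonneg_right _ hM0
            have h2 : volume (Icc (-(1/k)) (1/k)) = ENNReal.ofReal (2/k) := by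
              rw [Real.volume_Icc]; congr 1; ring
            have h1 : (volume.restrict (Ioo (-1:ℝ) 1)) (Icc (-(1/k)) (1/k))
                ≤ volume (Icc (-(1/k)) (1/k)) := by
              rw [Measure.restrict_apply measurableSet_Icc]
              exact measure_mono inter_subset_left
            calc ((volume.restrict (Ioo (-1:ℝ) 1)) (Icc (-(1/k)) (1/k))).toReal
                ≤ (volume (Icc (-(1/k)) (1/k))).toReal :=
                  ENNReal.toReal_mono (by rw [h2]; exact ENNReal.ofReal_ne_top) h1
              _ = 2/k := by rw [h2, ENNReal.toReal_ofReal (by positivity)]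
    -- lower bound on the L² norm
    have hvc : Continuous v := continuous_const.max (by fun_prop)
    have hv2int : IntegrableOn (fun x => (v x) ^ 2) (Ioo (-1:ℝ) 1) volume :=
      ((hvc.pow 2).integrableOn_Icc).mono_set Ioo_subset_Icc_self
    have hlow1 : ∀ x, Set.indicator (Ioo (-(1/(2*k))) (1/(2*k))) (fun _ => (9:ℝ)/16) x
        ≤ (v x) ^ 2 := by
      intro x
      by_cases hxm : x ∈ Ioo (-(1/(2*k))) (1/(2*k))
      · rw [Set.indicator_of_mem hxm]
        have h2k : (0:ℝ) < 2*k := by linarith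
        have ht1 : x * (2*k) < 1 := (lt_div_iff₀ h2k).mp hxm.2
        have ht2 : -1 < x * (2*k) := by
          have hh : (-1)/(2*k) < x := by rw [neg_div]; exact hxm.1
          exact (div_lt_iff₀ h2k).mp hh
        have hge : 3/4 ≤ v x := le_trans (by nlinarith) (le_max_right _ _)
        nlinarith [hge]
      · rw [Set.indicator_of_notMem hxm]
        positivity
    have hsub : Ioo (-(1/(2*k))) (1/(2*k)) ⊆ Ioo (-1:ℝ) 1 := by
      apply Ioo_subset_Ioo
      · have : 1/(2*k) ≤ 1/2 := by
          apply div_le_div_of_nonneg_left (by norm_num) (by norm_num) (by linarith)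
        linarith
      · have : 1/(2*k) ≤ 1/2 := by
          apply div_le_div_of_nonneg_left (by norm_num) (by norm_num) (by linarith)
        linarith
    have hlow : (9:ℝ)/16 * (1/k) ≤ ∫ x in Ioo (-1:ℝ) 1, (v x) ^ 2 := by
      have heq : (∫ x in Ioo (-1:ℝ) 1,
            Set.indicator (Ioo (-(1/(2*k))) (1/(2*k))) (fun _ => (9:ℝ)/16) x)
          = (9:ℝ)/16 * (1/k) := by
        rw [integral_indicator measurableSet_Ioo, setIntegral_const, smul_eq_mul, measureReal_def]
        rw [Measure.restrict_apply measurableSet_Ioo,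
          inter_eq_left.mpr hsub, Real.volume_Ioo]
        have hlen : 1/(2*k) - -(1/(2*k)) = 1/k := by
          field_simp
          norm_num
        rw [hlen, ENNReal.toReal_ofReal (by positivity)]
        ring
      rw [← heq]
      apply integral_mono_of_nonneg
      · exact Filter.Eventually.of_forall fun x =>
          Set.indicator_nonneg (fun _ _ => by norm_num) x
      · exact hv2int
      · exact Filter.Eventually.of_forall hlow1
    have hMval : M = (4 + Real.pi ^ 2) * (n:ℝ) ^ ((2:ℝ)/(1+γ)) := by
      have hrw : ((n:ℝ) * Real.pi) ^ 2 * (1/k) ^ (2*γ)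
          = Real.pi ^ 2 * ((n:ℝ) ^ 2 * (1/k) ^ (2*γ)) := by ring
      rw [hM, hk2, hrw, hpot]; ring
    have hp0 : (0:ℝ) ≤ (n:ℝ) ^ ((2:ℝ)/(1+γ)) := by positivity
    calc (∫ x in Ioo (-1:ℝ) 1,
          ((v' x) ^ 2 + ((n:ℝ) * Real.pi) ^ 2 * |x| ^ (2*γ) * (v x) ^ 2))
        ≤ (2/k) * M := hup
      _ = 32 * (4 + Real.pi ^ 2) / 9 * (n:ℝ) ^ ((2:ℝ)/(1+γ)) * ((9:ℝ)/16 * (1/k)) := by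
          rw [hMval]; field_simp; ring
      _ ≤ 32 * (4 + Real.pi ^ 2) / 9 * (n:ℝ) ^ ((2:ℝ)/(1+γ))
            * ∫ x in Ioo (-1:ℝ) 1, (v x) ^ 2 := by
          apply mul_le_mul_of_nonneg_left hlow
          positivity
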